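/- Let Δ be a pure (d-1)-dimensional simplicial complex with H̃_{d-1}(Δ) ≠ 0 and b(Δ) < d - 2. Then for all i < d - b(Δ) - 1, b_{i,i+d-1}(k[Δ]) = 0; i.e., k[Δ] satisfies property 𝔅_{d-b(Δ)-1}. -/

import Mathlib

open Finset

/-- An abstract simplicial complex on a finite linearly ordered vertex set `V`
(containing the empty face). -/
structure SComplex (V : Type) [Fintype V] [LinearOrder V] where
  faces : Set (Finset V)
  empty_mem : (∅ : Finset V) ∈ faces
  down_closed : ∀ ⦃F G : Finset V⦄, F ∈ faces → G ⊆ F → G ∈ faces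

namespace SComplex

variable {V : Type} [Fintype V] [LinearOrder V]

/-- Faces of cardinality `j`. -/
def simplex (K : SComplex V) (j : ℕ) := {F : Finset V // F ∈ K.faces ∧ F.card = j}

/-- Simplicial chains supported on faces of cardinality `j` (so `j = n + 1` gives the
`n`-dimensional chains, and `j = 0` corresponds to the empty face, yielding
*reduced* homology below). -/
abbrev chains (R : Type) [CommRing R] (K : SComplex V) (j : ℕ) := K.simplex j →₀ R

/-- The simplicial boundary map, from chains on faces of cardinality `j + 1`
to chains on faces of cardinality `j`. -/
noncomputable def bdry (R : Type) [CommRing R] (K : SComplex V) (j : ℕ) :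
    K.chains R (j + 1) →ₗ[R] K.chains R j :=
  Finsupp.lsum R fun s => LinearMap.toSpanSingleton R _
    (∑ v ∈ s.1.attach, ((-1 : R) ^ ((s.1.filter (· < v.1)).card)) •
      Finsupp.single (⟨s.1.erase v.1, K.down_closed s.2.1 (Finset.erase_subset _ _),
        by simp [Finset.card_erase_of_mem v.2, s.2.2]⟩ : K.simplex j) (1 : R))

/-- Reduced `n`-cycles (chains on faces of cardinality `n + 1` with zero boundary). -/
noncomputable def cycles (R : Type) [CommRing R] (K : SComplex V) (n : ℕ) :
    Submodule R (K.chains R (n + 1)) := LinearMap.ker (K.bdry R n)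

/-- Reduced `n`-boundaries. -/
noncomputable def bdries (R : Type) [CommRing R] (K : SComplex V) (n : ℕ) :
    Submodule R (K.chains R (n + 1)) := LinearMap.range (K.bdry R (n + 1))

/-- Reduced simplicial homology of `K` in dimension `n` with coefficients in `R`,
realized as the image of the cycles in the chains modulo the boundaries. -/
noncomputable abbrev Hred (R : Type) [CommRing R] (K : SComplex V) (n : ℕ) :=
  ↥(Submodule.map (K.bdries R n).mkQ (K.cycles R n))

/-- The induced subcomplex on a vertex subset `W`. -/
def induced (K : SComplex V) (W : Finset V) : SComplex V where
  faces := {F | F ∈ K.faces ∧ F ⊆ W}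
  empty_mem := ⟨K.empty_mem, Finset.empty_subset _⟩
  down_closed := fun _ _ hF hG => ⟨K.down_closed hF.1 hG, hG.trans hF.2⟩

/-- The underlying graph (1-skeleton) of a simplicial complex. -/
def skeleton (K : SComplex V) : SimpleGraph V where
  Adj u v := u ≠ v ∧ ({u, v} : Finset V) ∈ K.faces
  symm := by
    constructor
    intro u v h
    refine ⟨h.1.symm, ?_⟩
    rw [Finset.pair_comm]
    exact h.2
  loopless := ⟨fun v h => h.1 rfl⟩

/-- The vertex set of a simplicial complex. -/
def vertexSet (K : SComplex V) : Set V := {v | {v} ∈ K.faces}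

/-- A set of vertices is complete if its elements are pairwise adjacent. -/
def IsComplete (K : SComplex V) (W : Finset V) : Prop :=
  ∀ u ∈ W, ∀ v ∈ W, u ≠ v → ({u, v} : Finset V) ∈ K.faces

/-- A complex is flag if it is the clique complex of its 1-skeleton. -/
def IsFlag (K : SComplex V) : Prop := ∀ W : Finset V, K.IsComplete W → W ∈ K.faces

/-- One plus the dimension of `K`: the maximal cardinality of a face. -/
noncomputable def dimP1 (K : SComplex V) : ℕ := sSup {j | ∃ F ∈ K.faces, F.card = j}

/-- `K` is pure, with all facets of cardinality `d`. -/
def Pure (K : SComplex V) (d : ℕ) : Prop :=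
  ∀ F ∈ K.faces, ∃ G ∈ K.faces, F ⊆ G ∧ G.card = d

/-- `K` is a minimal `n`-cycle over `R`: it is pure `n`-dimensional and supports
precisely one homology `n`-class (up to scalars), whose support is all of `K`. -/
def IsMinimalCycle (R : Type) [CommRing R] (K : SComplex V) (n : ℕ) : Prop :=
  K.dimP1 = n + 1 ∧ K.Pure (n + 1) ∧
    ∃ ζ ∈ K.cycles R n, (∀ s : K.simplex (n + 1), ζ s ≠ 0) ∧
      ∀ z ∈ K.cycles R n, ∃ c : R, z = c • ζ

end SComplex

/-- Graded Betti numbers of the Stanley–Reisner ring of `K` over `k`, via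
Hochster's formula: `b_{i,j} = ∑_{#W = j} dim_k H̃_{j-i-1}(K_W)`. -/
noncomputable def bettiH (k : Type) [Field k] {V : Type} [Fintype V] [LinearOrder V]
    (K : SComplex V) (i j : ℕ) : ℕ :=
  ∑ W ∈ Finset.powersetCard j (Finset.univ : Finset V),
    Module.finrank k (SComplex.Hred k (K.induced W) (j - i - 1))

/-- A graph is `m`-connected if it has at least `m` vertices and removing
any set of fewer than `m` vertices leaves a connected graph. -/
def KConn {V : Type} [Fintype V] (G : SimpleGraph V) (m : ℕ) : Prop :=
  m ≤ Fintype.card V ∧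
    ∀ S : Finset V, S.card < m → (SimpleGraph.induce ((↑S : Set V)ᶜ) G).Connected

/-- The vertex connectivity of a graph: the largest `m` such that it is `m`-connected. -/
noncomputable def connectivity {V : Type} [Fintype V] (G : SimpleGraph V) : ℕ :=
  sSup {m | KConn G m}


namespace SComplex

variable {V : Type} [Fintype V] [LinearOrder V]

/-- The link of a face `σ` of `K`. -/
def link (K : SComplex V) (s : Finset V) (hs : s ∈ K.faces) : SComplex V where
  faces := {t | t ∩ s = ∅ ∧ t ∪ s ∈ K.faces}
  empty_mem := ⟨Finset.empty_inter s, by simpa using hs⟩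
  down_closed := by
    intro F G hF hG
    constructor
    · rw [← Finset.subset_empty, ← hF.1]
      exact Finset.inter_subset_inter hG (Finset.Subset.refl s)
    · exact K.down_closed hF.2 (Finset.union_subset_union hG (Finset.Subset.refl s))

/-- The degree of a face: the maximal cardinality of a facet containing it. -/
noncomputable def degree (K : SComplex V) (s : Finset V) : ℕ :=
  sSup {j | ∃ F ∈ K.faces, s ⊆ F ∧ F.card = j}

/-- `K` is banner if every critical complete set of size at least `dim K + 1`
is a face of `K`. -/
def IsBanner (K : SComplex V) : Prop :=
  ∀ W : Finset V, K.IsComplete W → (∃ v ∈ W, W.erase v ∈ K.faces) →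
    K.dimP1 ≤ W.card → W ∈ K.faces

/-- `K` is (isomorphic to) the boundary of the 2-simplex. -/
def IsBdTwoSimplex (K : SComplex V) : Prop :=
  ∃ a b c : V, a ≠ b ∧ a ≠ c ∧ b ≠ c ∧
    K.faces = {F | F ⊆ ({a, b, c} : Finset V) ∧ F ≠ ({a, b, c} : Finset V)}

/-- The banner number of `K`: the least `b` such that the link of every face of
cardinality `b` and degree `dim K + 1` is banner or the boundary of the 2-simplex. -/
noncomputable def bannerNumber (K : SComplex V) : ℕ :=
  sInf {b | ∀ s : Finset V, ∀ hs : s ∈ K.faces, s.card = b → K.degree s = K.dimP1 →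
    IsBanner (K.link s hs) ∨ IsBdTwoSimplex (K.link s hs)}

end SComplex

namespace StmtAux

open Finsupp

variable {V : Type} [Fintype V] [LinearOrder V] {k : Type} [Field k]

/-- The ambient module of chains: finitely supported functions on all finsets. -/
abbrev Amb (k V : Type) [Fintype V] [LinearOrder V] [Field k] := Finset V →₀ k

/-- Ambient boundary of a single finset. -/
noncomputable def bnd (k : Type) [Field k] (F : Finset V) : Amb k V :=
  ∑ v ∈ F, ((-1 : k) ^ ((F.filter (· < v)).card)) • Finsupp.single (F.erase v) (1 : k)

/-- Ambient boundary operator. -/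
noncomputable def Dop (k : Type) [Field k] : Amb k V →ₗ[k] Amb k V :=
  Finsupp.lsum k fun F => LinearMap.toSpanSingleton k _ (bnd k F)

/-- Cone operator at a vertex `u` (zero on faces containing `u`). -/
noncomputable def cone (k : Type) [Field k] (u : V) : Amb k V →ₗ[k] Amb k V :=
  Finsupp.lsum k fun F => LinearMap.toSpanSingleton k _
    (if u ∈ F then 0 else
      ((-1 : k) ^ ((F.filter (· < u)).card)) • Finsupp.single (insert u F) (1 : k))

/-- Link extraction at a vertex `u` (zero on faces not containing `u`). -/
noncomputable def lnk (k : Type) [Field k] (u : V) : Amb k V →ₗ[k] Amb k V :=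
  Finsupp.lsum k fun F => LinearMap.toSpanSingleton k _
    (if u ∈ F then
      ((-1 : k) ^ (((F.erase u).filter (· < u)).card)) • Finsupp.single (F.erase u) (1 : k)
    else 0)

/-- Part of a chain on faces containing `u`. -/
noncomputable def Pf (k : Type) [Field k] (u : V) : Amb k V →ₗ[k] Amb k V :=
  Finsupp.lsum k fun F => LinearMap.toSpanSingleton k _
    (if u ∈ F then Finsupp.single F (1 : k) else 0)

/-- Part of a chain on faces not containing `u`. -/
noncomputable def Nf (k : Type) [Field k] (u : V) : Amb k V →ₗ[k] Amb k V :=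
  Finsupp.lsum k fun F => LinearMap.toSpanSingleton k _
    (if u ∈ F then 0 else Finsupp.single F (1 : k))

@[simp] lemma Dop_single (F : Finset V) (a : k) :
    Dop k (Finsupp.single F a) = a • bnd k F := by
  simp [Dop, Finsupp.lsum_single, LinearMap.toSpanSingleton_apply]

@[simp] lemma cone_single (F : Finset V) (a : k) :
    cone k u (Finsupp.single F a) = a • (if u ∈ F then 0 else
      ((-1 : k) ^ ((F.filter (· < u)).card)) • Finsupp.single (insert u F) (1 : k)) := by
  simp [cone, Finsupp.lsum_single, LinearMap.toSpanSingleton_apply]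

@[simp] lemma lnk_single (F : Finset V) (a : k) :
    lnk k u (Finsupp.single F a) = a • (if u ∈ F then
      ((-1 : k) ^ (((F.erase u).filter (· < u)).card)) • Finsupp.single (F.erase u) (1 : k)
    else 0) := by
  simp [lnk, Finsupp.lsum_single, LinearMap.toSpanSingleton_apply]

@[simp] lemma Pf_single (F : Finset V) (a : k) :
    Pf k u (Finsupp.single F a) = a • (if u ∈ F then Finsupp.single F (1 : k) else 0) := by
  simp [Pf, Finsupp.lsum_single, LinearMap.toSpanSingleton_apply]

@[simp] lemma Nf_single (F : Finset V) (a : k) :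
    Nf k u (Finsupp.single F a) = a • (if u ∈ F then 0 else Finsupp.single F (1 : k)) := by
  simp [Nf, Finsupp.lsum_single, LinearMap.toSpanSingleton_apply]

end StmtAux
namespace StmtAux

variable {V : Type} [Fintype V] [LinearOrder V] {k : Type} [Field k]

lemma neg_one_pow_sq (n : ℕ) : ((-1 : k) ^ n) * ((-1 : k) ^ n) = 1 := by
  rw [← mul_pow]; norm_num

/-- The key sign identity for the contracting homotopy, on basis elements. -/
lemma dop_cone_single (u : V) (F : Finset V) (hu : u ∉ F) :
    Dop k (cone k u (Finsupp.single F (1:k)))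
      = Finsupp.single F (1:k) - cone k u (Dop k (Finsupp.single F (1:k))) := by
  classical
  have hcone : cone k u (Finsupp.single F (1:k))
      = (-1:k) ^ ((F.filter (· < u)).card) • Finsupp.single (insert u F) (1:k) := by
    rw [cone_single, if_neg hu, one_smul]
  rw [hcone, map_smul, Dop_single, one_smul, Dop_single, one_smul]
  -- LHS : ε • bnd (insert u F) ; RHS : single F 1 - cone k u (bnd F)
  have hbndins : bnd k (insert u F)
      = (-1:k) ^ ((F.filter (· < u)).card) • Finsupp.single F (1:k)
        + ∑ v ∈ F, ((-1:k) ^ (((insert u F).filter (· < v)).card)) •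
            Finsupp.single (insert u (F.erase v)) (1:k) := by
    rw [bnd, Finset.sum_insert hu]
    congr 1
    · rw [Finset.filter_insert, if_neg (lt_irrefl u), Finset.erase_insert hu]
    · refine Finset.sum_congr rfl fun v hv => ?_
      have hne : u ≠ v := fun h => hu (h ▸ hv)
      rw [Finset.erase_insert_of_ne hne]
  have hconebnd : cone k u (bnd k F)
      = ∑ v ∈ F, (((-1:k) ^ ((F.filter (· < v)).card)) *
          ((-1:k) ^ (((F.erase v).filter (· < u)).card))) •
            Finsupp.single (insert u (F.erase v)) (1:k) := by
    rw [bnd, map_sum]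
    refine Finset.sum_congr rfl fun v hv => ?_
    have huv : u ∉ F.erase v := fun h => hu (Finset.mem_of_mem_erase h)
    rw [map_smul, cone_single, one_smul, if_neg huv, smul_smul]
  rw [hbndins, hconebnd, smul_add, smul_smul, neg_one_pow_sq, one_smul, Finset.smul_sum,
    sub_eq_add_neg, ← Finset.sum_neg_distrib]
  congr 1
  refine Finset.sum_congr rfl fun v hv => ?_
  rw [smul_smul, ← neg_smul]
  congr 1
  -- sign identity
  have hne : v ≠ u := fun h => hu (h ▸ hv)
  have h1 : ((insert u F).filter (· < v)).card
      = (F.filter (· < v)).card + (if u < v then 1 else 0) := by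
    rw [Finset.filter_insert]
    split_ifs with h
    · rw [Finset.card_insert_of_notMem (fun hc => hu (Finset.mem_of_mem_filter _ hc))]
    · rw [Nat.add_zero]
  have h2 : (F.filter (· < u)).card
      = ((F.erase v).filter (· < u)).card + (if v < u then 1 else 0) := by
    rw [Finset.filter_erase]
    split_ifs with h
    · have hv' : v ∈ F.filter (· < u) := Finset.mem_filter.mpr ⟨hv, h⟩
      rw [Finset.card_erase_add_one hv']
    · have : v ∉ F.filter (· < u) := fun hc => h (Finset.mem_filter.mp hc).2
      rw [Finset.erase_eq_of_notMem this, Nat.add_zero]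
  rw [h1, h2]
  rcases lt_or_gt_of_ne hne with hlt | hgt
  · rw [if_pos hlt, if_neg (not_lt_of_gt hlt), Nat.add_zero, pow_add, pow_one]
    ring
  · rw [if_neg (not_lt_of_gt hgt), if_pos hgt, Nat.add_zero, pow_add, pow_one]
    ring

end StmtAux
namespace StmtAux

variable {V : Type} [Fintype V] [LinearOrder V] {k : Type} [Field k]

lemma supp_lsum {g : Finset V → k →ₗ[k] Amb k V} {z : Amb k V} {G : Finset V}
    (hG : G ∈ ((Finsupp.lsum k g) z).support) :
    ∃ F ∈ z.support, G ∈ (g F (z F)).support := by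
  classical
  rw [Finsupp.lsum_apply, Finsupp.sum] at hG
  exact Finsupp.mem_support_finset_sum _ hG

lemma supp_bnd {F G : Finset V} (hG : G ∈ (bnd k F).support) :
    ∃ v ∈ F, G = F.erase v := by
  classical
  obtain ⟨v, hv, hG'⟩ := Finsupp.mem_support_finset_sum _ hG
  refine ⟨v, hv, ?_⟩
  have := Finsupp.support_smul hG'
  simpa using Finset.mem_singleton.mp (Finsupp.support_single_subset this)

lemma supp_Dop {z : Amb k V} {G : Finset V} (hG : G ∈ (Dop k z).support) :
    ∃ F ∈ z.support, ∃ v ∈ F, G = F.erase v := by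
  obtain ⟨F, hF, hG'⟩ := supp_lsum hG
  have hG'' : G ∈ ((z F) • bnd k F).support := by
    simpa [LinearMap.toSpanSingleton_apply] using hG'
  exact ⟨F, hF, supp_bnd (Finsupp.support_smul hG'')⟩

lemma supp_cone {u : V} {z : Amb k V} {G : Finset V} (hG : G ∈ (cone k u z).support) :
    ∃ F ∈ z.support, u ∉ F ∧ G = insert u F := by
  classical
  obtain ⟨F, hF, hG'⟩ := supp_lsum hG
  simp only [LinearMap.toSpanSingleton_apply] at hG'
  by_cases hu : u ∈ F
  · rw [if_pos hu] at hG'; simp at hG'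
  · rw [if_neg hu] at hG'
    refine ⟨F, hF, hu, ?_⟩
    have h1 := Finsupp.support_smul hG'
    have h2 := Finsupp.support_smul h1
    simpa using Finset.mem_singleton.mp (Finsupp.support_single_subset h2)

lemma supp_lnk {u : V} {z : Amb k V} {G : Finset V} (hG : G ∈ (lnk k u z).support) :
    ∃ F ∈ z.support, u ∈ F ∧ G = F.erase u := by
  classical
  obtain ⟨F, hF, hG'⟩ := supp_lsum hG
  simp only [LinearMap.toSpanSingleton_apply] at hG'
  by_cases hu : u ∈ F
  · rw [if_pos hu] at hG'
    refine ⟨F, hF, hu, ?_⟩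
    have h1 := Finsupp.support_smul hG'
    have h2 := Finsupp.support_smul h1
    simpa using Finset.mem_singleton.mp (Finsupp.support_single_subset h2)
  · rw [if_neg hu] at hG'; simp at hG'

lemma supp_Pf {u : V} {z : Amb k V} {G : Finset V} (hG : G ∈ (Pf k u z).support) :
    G ∈ z.support ∧ u ∈ G := by
  classical
  obtain ⟨F, hF, hG'⟩ := supp_lsum hG
  simp only [LinearMap.toSpanSingleton_apply] at hG'
  by_cases hu : u ∈ F
  · rw [if_pos hu] at hG'
    have h1 := Finsupp.support_smul hG'
    have := Finset.mem_singleton.mp (Finsupp.support_single_subset h1)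
    subst this; exact ⟨hF, hu⟩
  · rw [if_neg hu] at hG'; simp at hG'

lemma supp_Nf {u : V} {z : Amb k V} {G : Finset V} (hG : G ∈ (Nf k u z).support) :
    G ∈ z.support ∧ u ∉ G := by
  classical
  obtain ⟨F, hF, hG'⟩ := supp_lsum hG
  simp only [LinearMap.toSpanSingleton_apply] at hG'
  by_cases hu : u ∈ F
  · rw [if_pos hu] at hG'; simp at hG'
  · rw [if_neg hu] at hG'
    have h1 := Finsupp.support_smul hG'
    have := Finset.mem_singleton.mp (Finsupp.support_single_subset h1)
    subst this; exact ⟨hF, hu⟩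

/-- Homotopy identity for chains avoiding `u`. -/
lemma dop_cone {u : V} {x : Amb k V} (hx : ∀ F ∈ x.support, u ∉ F) :
    Dop k (cone k u x) = x - cone k u (Dop k x) := by
  classical
  conv_lhs => rw [← Finsupp.sum_single x, Finsupp.sum]
  conv_rhs => rw [← Finsupp.sum_single x, Finsupp.sum]
  rw [map_sum, map_sum, map_sum, map_sum, ← Finset.sum_sub_distrib]
  refine Finset.sum_congr rfl fun F hF => ?_
  have h1 : Finsupp.single F (x F) = (x F) • Finsupp.single F (1:k) := by
    rw [Finsupp.smul_single, smul_eq_mul, mul_one]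
  rw [h1, map_smul, map_smul, map_smul, map_smul, ← smul_sub]
  congr 1
  exact dop_cone_single u F (hx F hF)

lemma cone_lnk (u : V) (z : Amb k V) : cone k u (lnk k u z) = Pf k u z := by
  classical
  have : (cone k u).comp (lnk k u) = Pf k u := by
    apply Finsupp.lhom_ext
    intro F b
    simp only [LinearMap.comp_apply, lnk_single, Pf_single]
    by_cases hu : u ∈ F
    · rw [if_pos hu, if_pos hu, map_smul, map_smul, cone_single, one_smul,
        if_neg (Finset.notMem_erase u F), Finset.insert_erase hu, smul_smul, smul_smul,
        mul_assoc, neg_one_pow_sq, mul_one]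
    · rw [if_neg hu, if_neg hu, smul_zero, map_zero]
  exact LinearMap.congr_fun this z

lemma lnk_cone (u : V) (z : Amb k V) : lnk k u (cone k u z) = Nf k u z := by
  classical
  have : (lnk k u).comp (cone k u) = Nf k u := by
    apply Finsupp.lhom_ext
    intro F b
    simp only [LinearMap.comp_apply, cone_single, Nf_single]
    by_cases hu : u ∈ F
    · rw [if_pos hu, if_pos hu, smul_zero, map_zero]
    · rw [if_neg hu, if_neg hu, map_smul, map_smul, lnk_single, one_smul,
        if_pos (Finset.mem_insert_self u F), Finset.erase_insert hu, smul_smul, smul_smul,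
        mul_assoc, neg_one_pow_sq, mul_one]
  exact LinearMap.congr_fun this z

lemma Pf_add_Nf (u : V) (z : Amb k V) : Pf k u z + Nf k u z = z := by
  classical
  have : Pf k u + Nf k u = LinearMap.id := by
    apply Finsupp.lhom_ext
    intro F b
    simp only [LinearMap.add_apply, Pf_single, Nf_single, LinearMap.id_apply]
    by_cases hu : u ∈ F
    · rw [if_pos hu, if_pos hu, smul_zero, add_zero, Finsupp.smul_single, smul_eq_mul, mul_one]
    · rw [if_neg hu, if_neg hu, smul_zero, zero_add, Finsupp.smul_single, smul_eq_mul, mul_one]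
  calc Pf k u z + Nf k u z = (Pf k u + Nf k u) z := rfl
    _ = z := by rw [this]; rfl

lemma Pf_of_ufree {u : V} {x : Amb k V} (hx : ∀ F ∈ x.support, u ∉ F) : Pf k u x = 0 := by
  classical
  rw [← Finsupp.support_eq_empty]
  by_contra h
  obtain ⟨G, hG⟩ := Finset.nonempty_of_ne_empty h
  obtain ⟨h1, h2⟩ := supp_Pf hG
  exact hx G h1 h2

lemma Nf_of_ufree {u : V} {x : Amb k V} (hx : ∀ F ∈ x.support, u ∉ F) : Nf k u x = x := by
  have := Pf_add_Nf u x
  rw [Pf_of_ufree hx, zero_add] at this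
  exact this

lemma lnk_of_ufree {u : V} {x : Amb k V} (hx : ∀ F ∈ x.support, u ∉ F) : lnk k u x = 0 := by
  classical
  rw [← Finsupp.support_eq_empty]
  by_contra h
  obtain ⟨G, hG⟩ := Finset.nonempty_of_ne_empty h
  obtain ⟨F, h1, h2, _⟩ := supp_lnk hG
  exact hx F h1 h2

lemma lnk_ufree {u : V} (z : Amb k V) : ∀ F ∈ (lnk k u z).support, u ∉ F := by
  intro F hF
  obtain ⟨G, _, _, rfl⟩ := supp_lnk hF
  exact Finset.notMem_erase u G

lemma Dop_ufree {u : V} {x : Amb k V} (hx : ∀ F ∈ x.support, u ∉ F) :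
    ∀ F ∈ (Dop k x).support, u ∉ F := by
  intro G hG
  obtain ⟨F, hF, v, hv, rfl⟩ := supp_Dop hG
  exact fun hc => hx F hF (Finset.mem_of_mem_erase hc)

/-- Splitting a cycle at a vertex. -/
lemma split_cycle (u : V) {z : Amb k V} (hz : Dop k z = 0) :
    Dop k (lnk k u z) = 0 ∧ Dop k (Nf k u z) = - lnk k u z := by
  classical
  set y := lnk k u z with hy
  have hyf : ∀ F ∈ y.support, u ∉ F := lnk_ufree z
  have hdec : z = cone k u y + Nf k u z := by
    rw [hy, cone_lnk, Pf_add_Nf]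
  have heq : (0 : Amb k V) = (y - cone k u (Dop k y)) + Dop k (Nf k u z) := by
    rw [← dop_cone hyf, ← map_add, ← hdec, hz]
  have h2 : Dop k y = 0 := by
    have h := congrArg (lnk k u) heq
    rw [map_zero, map_add, map_sub, lnk_of_ufree hyf, lnk_cone,
      Nf_of_ufree (Dop_ufree hyf), lnk_of_ufree (Dop_ufree (fun F hF => (supp_Nf hF).2)),
      add_zero, zero_sub] at h
    exact neg_eq_zero.mp h.symm
  refine ⟨h2, ?_⟩
  have h3 := heq
  rw [h2, map_zero, sub_zero] at h3
  exact eq_neg_of_add_eq_zero_right h3.symm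

end StmtAux
namespace StmtAux

open SComplex

variable {V : Type} [Fintype V] [LinearOrder V]

lemma scomplex_ext {K₁ K₂ : SComplex V} (h : K₁.faces = K₂.faces) : K₁ = K₂ := by
  cases K₁; cases K₂; simp_all

lemma card_le_dimP1 (K : SComplex V) {F : Finset V} (hF : F ∈ K.faces) :
    F.card ≤ K.dimP1 := by
  apply le_csSup
  · refine ⟨Fintype.card V, ?_⟩
    rintro j ⟨G, _, rfl⟩
    exact Finset.card_le_univ G
  · exact ⟨F, hF, rfl⟩

lemma dimP1_eq {K : SComplex V} {m : ℕ} (hmem : ∃ F ∈ K.faces, F.card = m)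
    (hub : ∀ F ∈ K.faces, F.card ≤ m) : K.dimP1 = m := by
  refine le_antisymm ?_ ?_
  · apply csSup_le
    · obtain ⟨F, hF, hc⟩ := hmem; exact ⟨m, F, hF, hc⟩
    · rintro j ⟨G, hG, rfl⟩; exact hub G hG
  · obtain ⟨F, hF, hc⟩ := hmem
    apply le_csSup
    · refine ⟨Fintype.card V, ?_⟩
      rintro j ⟨G, _, rfl⟩
      exact Finset.card_le_univ G
    · exact ⟨F, hF, hc⟩

lemma degree_le_dimP1 (K : SComplex V) (s : Finset V) (hne : ∃ F ∈ K.faces, s ⊆ F) :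
    K.degree s ≤ K.dimP1 := by
  apply csSup_le
  · obtain ⟨F, hF, hs⟩ := hne; exact ⟨F.card, F, hF, hs, rfl⟩
  · rintro j ⟨G, hG, _, rfl⟩; exact card_le_dimP1 K hG

lemma degree_eq_of_facet {K : SComplex V} {s G : Finset V} (hG : G ∈ K.faces)
    (hsub : s ⊆ G) (hcard : G.card = K.dimP1) : K.degree s = K.dimP1 := by
  refine le_antisymm (degree_le_dimP1 K s ⟨G, hG, hsub⟩) ?_
  apply le_csSup
  · refine ⟨Fintype.card V, ?_⟩
    rintro j ⟨F, _, _, rfl⟩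
    exact Finset.card_le_univ F
  · exact ⟨G, hG, hsub, hcard⟩

lemma degree_eq_dimP1_of_pure {K : SComplex V} {d : ℕ} (hd : K.dimP1 = d) (hp : K.Pure d)
    {s : Finset V} (hs : s ∈ K.faces) : K.degree s = d := by
  obtain ⟨G, hG, hsub, hcard⟩ := hp s hs
  rw [← hd]
  exact degree_eq_of_facet hG hsub (by rw [hcard, hd])

lemma facet_of_degree {K : SComplex V} {s : Finset V} {m : ℕ} (hs : s ∈ K.faces)
    (h : K.degree s = m) : ∃ G ∈ K.faces, s ⊆ G ∧ G.card = m := by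
  have hne : {j | ∃ F ∈ K.faces, s ⊆ F ∧ F.card = j}.Nonempty :=
    ⟨s.card, s, hs, Finset.Subset.refl s, rfl⟩
  have hbdd : BddAbove {j | ∃ F ∈ K.faces, s ⊆ F ∧ F.card = j} := by
    refine ⟨Fintype.card V, ?_⟩
    rintro j ⟨F, _, _, rfl⟩
    exact Finset.card_le_univ F
  have := Nat.sSup_mem hne hbdd
  rw [show sSup {j | ∃ F ∈ K.faces, s ⊆ F ∧ F.card = j} = K.degree s from rfl, h] at this
  exact this

lemma mem_link_iff {K : SComplex V} {u : V} (hu : ({u} : Finset V) ∈ K.faces)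
    {t : Finset V} : t ∈ (K.link {u} hu).faces ↔ u ∉ t ∧ insert u t ∈ K.faces := by
  show t ∩ {u} = ∅ ∧ t ∪ {u} ∈ K.faces ↔ _
  rw [Finset.union_comm, ← Finset.insert_eq]
  constructor
  · rintro ⟨h1, h2⟩
    refine ⟨fun hc => ?_, h2⟩
    have : u ∈ t ∩ {u} := Finset.mem_inter.mpr ⟨hc, Finset.mem_singleton_self u⟩
    rw [h1] at this; exact Finset.notMem_empty u this
  · rintro ⟨h1, h2⟩
    refine ⟨?_, h2⟩
    rw [Finset.eq_empty_iff_forall_notMem]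
    intro x hx
    obtain ⟨hxt, hxu⟩ := Finset.mem_inter.mp hx
    rw [Finset.mem_singleton] at hxu
    exact h1 (hxu ▸ hxt)

lemma pure_link {K : SComplex V} {d : ℕ} (hp : K.Pure d) {u : V}
    (hu : ({u} : Finset V) ∈ K.faces) : (K.link {u} hu).Pure (d - 1) := by
  intro t ht
  rw [mem_link_iff] at ht
  obtain ⟨hut, htK⟩ := ht
  obtain ⟨G, hG, hsub, hcard⟩ := hp _ htK
  have huG : u ∈ G := hsub (Finset.mem_insert_self u t)
  refine ⟨G.erase u, ?_, ?_, ?_⟩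
  · rw [mem_link_iff]
    exact ⟨Finset.notMem_erase u G, by rwa [Finset.insert_erase huG]⟩
  · intro x hx
    exact Finset.mem_erase.mpr ⟨fun hc => hut (hc ▸ hx), hsub (Finset.mem_insert_of_mem hx)⟩
  · rw [Finset.card_erase_of_mem huG, hcard]

lemma dimP1_link {K : SComplex V} {d : ℕ} (hd : K.dimP1 = d) (hp : K.Pure d) {u : V}
    (hu : ({u} : Finset V) ∈ K.faces) (hd1 : 1 ≤ d) : (K.link {u} hu).dimP1 = d - 1 := by
  apply dimP1_eq
  · obtain ⟨G, hG, hsub, hcard⟩ := hp _ hu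
    have huG : u ∈ G := hsub (Finset.mem_singleton_self u)
    refine ⟨G.erase u, ?_, ?_⟩
    · rw [mem_link_iff]
      exact ⟨Finset.notMem_erase u G, by rwa [Finset.insert_erase huG]⟩
    · rw [Finset.card_erase_of_mem huG, hcard]
  · intro t ht
    rw [mem_link_iff] at ht
    have := card_le_dimP1 K ht.2
    rw [Finset.card_insert_of_notMem ht.1, hd] at this
    omega

/-- The banner property passes to vertex links. -/
lemma banner_link {K : SComplex V} {d : ℕ} (hd : K.dimP1 = d) (hp : K.Pure d) (hd3 : 3 ≤ d)
    (hK : K.IsBanner) {u : V} (hu : ({u} : Finset V) ∈ K.faces) :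
    (K.link {u} hu).IsBanner := by
  intro X hcomp hcrit hdimX
  obtain ⟨w, hwX, hXw⟩ := hcrit
  have hdimL : (K.link {u} hu).dimP1 = d - 1 := dimP1_link hd hp hu (by omega)
  have hX2 : 2 ≤ X.card := by rw [hdimL] at hdimX; omega
  have hpairs : ∃ a ∈ X, ∃ b ∈ X, a ≠ b := Finset.one_lt_card.mp (by omega)
  have huX : u ∉ X := by
    intro huX
    obtain ⟨a, ha, b, hb, hab⟩ := hpairs
    obtain ⟨q, hq, hqu⟩ : ∃ q ∈ X, q ≠ u := by
      by_cases h : a = u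
      · exact ⟨b, hb, fun hc => hab (h.trans hc.symm ▸ rfl)⟩
      · exact ⟨a, ha, h⟩
    have hpair := hcomp u huX q hq (fun h => hqu h.symm)
    rw [mem_link_iff] at hpair
    exact hpair.1 (Finset.mem_insert_self u {q})
  have hsingle : ∀ q ∈ X, ({q} : Finset V) ∈ (K.link {u} hu).faces := by
    intro q hq
    by_cases h : q = w
    · obtain ⟨a, ha, b, hb, hab⟩ := hpairs
      obtain ⟨r, hr, hrw⟩ : ∃ r ∈ X, r ≠ w := by
        by_cases h' : a = w
        · exact ⟨b, hb, fun hc => hab (h'.trans hc.symm ▸ rfl)⟩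
        · exact ⟨a, ha, h'⟩
      have hpair := hcomp w hwX r hr (fun hh => hrw hh.symm)
      have hsub : ({q} : Finset V) ⊆ {w, r} := by
        intro x hx
        rw [Finset.mem_singleton] at hx
        rw [hx, h]
        exact Finset.mem_insert_self w {r}
      exact (K.link {u} hu).down_closed hpair hsub
    · refine (K.link {u} hu).down_closed hXw ?_
      intro x hx
      rw [Finset.mem_singleton] at hx
      subst hx
      exact Finset.mem_erase.mpr ⟨h, hq⟩
  have hcompK : K.IsComplete (insert u X) := by
    intro p hp' q hq' hpq
    rcases Finset.mem_insert.mp hp' with rfl | hpX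
    · rcases Finset.mem_insert.mp hq' with rfl | hqX
      · exact absurd rfl hpq
      · have := (mem_link_iff hu).mp (hsingle q hqX)
        exact this.2
    · rcases Finset.mem_insert.mp hq' with rfl | hqX
      · have := (mem_link_iff hu).mp (hsingle p hpX)
        rw [Finset.pair_comm]
        exact this.2
      · have hpair := hcomp p hpX q hqX hpq
        rw [mem_link_iff] at hpair
        exact K.down_closed hpair.2 (Finset.subset_insert u {p, q})
  have huw : u ≠ w := fun h => huX (h ▸ hwX)
  have hcritK : ∃ v ∈ insert u X, (insert u X).erase v ∈ K.faces := by
    refine ⟨w, Finset.mem_insert_of_mem hwX, ?_⟩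
    rw [Finset.erase_insert_of_ne huw]
    exact ((mem_link_iff hu).mp hXw).2
  have hdimK : K.dimP1 ≤ (insert u X).card := by
    rw [Finset.card_insert_of_notMem huX, hd]
    rw [hdimL] at hdimX
    omega
  have hface := hK (insert u X) hcompK hcritK hdimK
  rw [mem_link_iff]
  exact ⟨huX, hface⟩

/-- The hypothesis `Hb`: links of all `b`-faces of full degree are banner. -/
def HbP (K : SComplex V) (b d : ℕ) : Prop :=
  ∀ s : Finset V, ∀ hs : s ∈ K.faces, s.card = b → K.degree s = d → (K.link s hs).IsBanner

lemma link_empty (K : SComplex V) (h : (∅ : Finset V) ∈ K.faces) : K.link ∅ h = K := by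
  apply scomplex_ext
  ext t
  show t ∩ ∅ = ∅ ∧ t ∪ ∅ ∈ K.faces ↔ t ∈ K.faces
  simp

lemma banner_of_HbP0 {K : SComplex V} {d : ℕ} (hd : K.dimP1 = d) (hp : K.Pure d)
    (hb : HbP K 0 d) : K.IsBanner := by
  have := hb ∅ K.empty_mem rfl (degree_eq_dimP1_of_pure hd hp K.empty_mem)
  rwa [link_empty] at this

lemma HbP0_of_banner {K : SComplex V} {d : ℕ} (hb : K.IsBanner) : HbP K 0 d := by
  intro s hs hcard _
  rw [Finset.card_eq_zero] at hcard
  subst hcard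
  rwa [link_empty]

lemma link_link {K : SComplex V} {u : V} (hu : ({u} : Finset V) ∈ K.faces)
    {s' : Finset V} (hs' : s' ∈ (K.link {u} hu).faces)
    (hins : insert u s' ∈ K.faces) :
    (K.link {u} hu).link s' hs' = K.link (insert u s') hins := by
  have hus' : u ∉ s' := ((mem_link_iff hu).mp hs').1
  apply scomplex_ext
  ext t
  show t ∩ s' = ∅ ∧ (t ∪ s') ∈ (K.link {u} hu).faces ↔
    t ∩ insert u s' = ∅ ∧ t ∪ insert u s' ∈ K.faces
  rw [mem_link_iff]
  constructor
  · rintro ⟨h1, h2, h3⟩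
    have hut : u ∉ t := fun hc => h2 (Finset.mem_union_left s' hc)
    constructor
    · rw [Finset.eq_empty_iff_forall_notMem]
      intro x hx
      obtain ⟨hxt, hxi⟩ := Finset.mem_inter.mp hx
      rcases Finset.mem_insert.mp hxi with rfl | hxs
      · exact hut hxt
      · rw [Finset.eq_empty_iff_forall_notMem] at h1
        exact h1 x (Finset.mem_inter.mpr ⟨hxt, hxs⟩)
    · have : insert u (t ∪ s') = t ∪ insert u s' := by
        ext x; simp [Finset.mem_insert, Finset.mem_union, or_left_comm]
      rwa [this] at h3
  · rintro ⟨h1, h2⟩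
    have hut : u ∉ t := by
      intro hc
      rw [Finset.eq_empty_iff_forall_notMem] at h1
      exact h1 u (Finset.mem_inter.mpr ⟨hc, Finset.mem_insert_self u s'⟩)
    refine ⟨?_, fun hc => (Finset.mem_union.mp hc).elim hut hus', ?_⟩
    · rw [Finset.eq_empty_iff_forall_notMem]
      intro x hx
      obtain ⟨hxt, hxs⟩ := Finset.mem_inter.mp hx
      rw [Finset.eq_empty_iff_forall_notMem] at h1
      exact h1 x (Finset.mem_inter.mpr ⟨hxt, Finset.mem_insert_of_mem hxs⟩)
    · have : insert u (t ∪ s') = t ∪ insert u s' := by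
        ext x; simp [Finset.mem_insert, Finset.mem_union, or_left_comm]
      rwa [this]

/-- Heredity of the `Hb` hypothesis to vertex links, decreasing `b`. -/
lemma HbP_link {K : SComplex V} {b d : ℕ} (hd : K.dimP1 = d) (hp : K.Pure d)
    (hb : HbP K (b + 1) d) {u : V} (hu : ({u} : Finset V) ∈ K.faces) (hd1 : 1 ≤ d) :
    HbP (K.link {u} hu) b (d - 1) := by
  intro s' hs' hcard hdeg
  obtain ⟨G, hG, hsG, hGcard⟩ := facet_of_degree hs' hdeg
  have hus' : u ∉ s' := ((mem_link_iff hu).mp hs').1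
  have hins : insert u s' ∈ K.faces := ((mem_link_iff hu).mp hs').2
  have hcard' : (insert u s').card = b + 1 := by
    rw [Finset.card_insert_of_notMem hus', hcard]
  have hGK : insert u G ∈ K.faces := ((mem_link_iff hu).mp hG).2
  have huG : u ∉ G := ((mem_link_iff hu).mp hG).1
  have hdeg' : K.degree (insert u s') = d := by
    rw [← hd]
    apply degree_eq_of_facet hGK
    · exact Finset.insert_subset_insert u hsG
    · rw [Finset.card_insert_of_notMem huG, hGcard, hd]; omega
  have hban := hb (insert u s') hins hcard' hdeg'
  rw [link_link hu hs' hins]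
  exact hban

end StmtAux
namespace StmtAux

open SComplex

variable {V : Type} [Fintype V] [LinearOrder V] {k : Type} [Field k]

lemma bnd_apply_erase {W : Finset V} {v : V} (hv : v ∈ W) :
    (bnd k W) (W.erase v) = (-1 : k) ^ ((W.filter (· < v)).card) := by
  classical
  rw [bnd, Finsupp.finset_sum_apply]
  rw [Finset.sum_eq_single_of_mem v hv]
  · rw [Finsupp.smul_apply, Finsupp.single_eq_same, smul_eq_mul, mul_one]
  · intro v' hv' hne
    rw [Finsupp.smul_apply, Finsupp.single_apply, if_neg, smul_zero]
    exact fun hc => hne ((Finset.erase_inj W hv').mp hc)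

/-- Lifting a bounding of the link cycle back through the cone. -/
lemma lift_vertex {K : SComplex V} {W : Finset V} {z : Amb k V} {u : V} {d : ℕ}
    (huK : ({u} : Finset V) ∈ K.faces) (huW : u ∈ W)
    (hsupp : ∀ F ∈ z.support, F ∈ K.faces ∧ F ⊆ W ∧ F.card = d - 1)
    (hz : Dop k z = 0)
    {γ : Amb k V}
    (hγsupp : ∀ t ∈ γ.support, t ∈ (K.link {u} huK).faces ∧ t ⊆ W.erase u ∧ t.card = d - 1)
    (hγ : Dop k γ = lnk k u z) (hdpos : 1 ≤ d) :
    ∃ z' : Amb k V, (∀ F ∈ z'.support, F ∈ K.faces ∧ F ⊆ W.erase u ∧ F.card = d - 1) ∧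
      Dop k z' = 0 ∧ z = z' - Dop k (cone k u γ) ∧
      (∀ G ∈ (cone k u γ).support, G ∈ K.faces ∧ G ⊆ W ∧ G.card = d) := by
  classical
  have hd1 : ∀ t ∈ γ.support, u ∉ t := by
    intro t ht hc
    exact (Finset.mem_erase.mp ((hγsupp t ht).2.1 hc)).1 rfl
  refine ⟨Nf k u z + γ, ?_, ?_, ?_, ?_⟩
  · intro F hF
    rcases Finset.mem_union.mp (Finsupp.support_add hF) with h | h
    · obtain ⟨hFz, hFu⟩ := supp_Nf h
      obtain ⟨h1, h2, h3⟩ := hsupp F hFz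
      exact ⟨h1, fun x hx => Finset.mem_erase.mpr ⟨fun hc => hFu (hc ▸ hx), h2 hx⟩, h3⟩
    · obtain ⟨h1, h2, h3⟩ := hγsupp F h
      refine ⟨?_, h2, h3⟩
      have := ((mem_link_iff huK).mp h1).2
      exact K.down_closed this (Finset.subset_insert u F)
  · rw [map_add, (split_cycle u hz).2, hγ, neg_add_cancel]
  · have h1 : Dop k (cone k u γ) = γ - Pf k u z := by
      rw [dop_cone hd1, hγ, cone_lnk]
    rw [h1]
    conv_lhs => rw [← Pf_add_Nf u z]
    abel
  · intro G hG
    obtain ⟨t, ht, hut, rfl⟩ := supp_cone hG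
    obtain ⟨h1, h2, h3⟩ := hγsupp t ht
    refine ⟨((mem_link_iff huK).mp h1).2, ?_, ?_⟩
    · exact Finset.insert_subset huW (fun x hx => Finset.mem_of_mem_erase (h2 hx))
    · rw [Finset.card_insert_of_notMem hut, h3]
      omega

end StmtAux
namespace StmtAux

open SComplex

variable {V : Type} [Fintype V] [LinearOrder V] {k : Type} [Field k]

/-- The main vanishing theorem: in a pure complex whose `b`-face links are banner,
    every top-codimension-one cycle supported on few vertices bounds. -/
theorem main_vanish (N : ℕ) : ∀ (d b : ℕ) (K : SComplex V) (W : Finset V) (z : Amb k V),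
    d + W.card ≤ N →
    K.dimP1 = d → K.Pure d → b + 3 ≤ d → HbP K b d →
    W.card ≤ 2 * d - b - 3 →
    (∀ F ∈ z.support, F ∈ K.faces ∧ F ⊆ W ∧ F.card = d - 1) →
    Dop k z = 0 →
    ∃ w : Amb k V, (∀ F ∈ w.support, F ∈ K.faces ∧ F ⊆ W ∧ F.card = d) ∧ Dop k w = z := by
  classical
  induction N with
  | zero => intro d b K W z hN _ _ hb3 _ _ _ _; omega
  | succ N IH =>
    intro d b K W z hN hdim hpure hb3 hHb hW hsupp hz
    by_cases hz0 : z = 0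
    · exact ⟨0, by simp, by rw [map_zero, hz0]⟩
    -- Case A : some unused vertex
    by_cases hA : ∃ u ∈ W, ∀ F ∈ z.support, u ∉ F
    · obtain ⟨u, huW, hunused⟩ := hA
      have hcard' : (W.erase u).card = W.card - 1 := Finset.card_erase_of_mem huW
      have hWpos : 1 ≤ W.card := Finset.card_pos.mpr ⟨u, huW⟩
      obtain ⟨w, hwsupp, hww⟩ := IH d b K (W.erase u) z (by omega) hdim hpure hb3 hHb
        (by omega)
        (fun F hF => ⟨(hsupp F hF).1,
          fun x hx => Finset.mem_erase.mpr ⟨fun hc => hunused F hF (hc ▸ hx), (hsupp F hF).2.1 hx⟩,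
          (hsupp F hF).2.2⟩) hz
      exact ⟨w, fun F hF => ⟨(hwsupp F hF).1,
        ((hwsupp F hF).2.1).trans (Finset.erase_subset u W), (hwsupp F hF).2.2⟩, hww⟩
    push_neg at hA
    obtain ⟨F₀, hF₀⟩ := Finsupp.support_nonempty_iff.mpr hz0
    obtain ⟨hF₀K, hF₀W, hF₀card⟩ := hsupp F₀ hF₀
    have hF₀ne : F₀.Nonempty := Finset.card_pos.mp (by omega)
    have hWge : d - 1 ≤ W.card := hF₀card ▸ Finset.card_le_card hF₀W
    obtain ⟨u₀, hu₀F⟩ := hF₀ne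
    have hu₀W : u₀ ∈ W := hF₀W hu₀F
    have hu₀K : ({u₀} : Finset V) ∈ K.faces :=
      K.down_closed hF₀K (Finset.singleton_subset_iff.mpr hu₀F)
    cases b with
    | succ b' =>
      -- descent to the vertex link, decreasing b
      set Λ := K.link {u₀} hu₀K with hΛdef
      have hΛdim : Λ.dimP1 = d - 1 := dimP1_link hdim hpure hu₀K (by omega)
      have hΛpure : Λ.Pure (d - 1) := pure_link hpure hu₀K
      have hΛHb : HbP Λ b' (d - 1) := HbP_link hdim hpure hHb hu₀K (by omega)
      have hycyc : Dop k (lnk k u₀ z) = 0 := (split_cycle u₀ hz).1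
      have hysupp : ∀ G ∈ (lnk k u₀ z).support,
          G ∈ Λ.faces ∧ G ⊆ W.erase u₀ ∧ G.card = (d - 1) - 1 := by
        intro G hG
        obtain ⟨F, hF, huF, rfl⟩ := supp_lnk hG
        obtain ⟨hFK, hFW, hFcard⟩ := hsupp F hF
        refine ⟨?_, ?_, ?_⟩
        · rw [mem_link_iff]
          exact ⟨Finset.notMem_erase u₀ F, by rwa [Finset.insert_erase huF]⟩
        · intro x hx
          exact Finset.mem_erase.mpr ⟨(Finset.mem_erase.mp hx).1, hFW (Finset.mem_of_mem_erase hx)⟩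
        · rw [Finset.card_erase_of_mem huF, hFcard]
      obtain ⟨γ, hγsupp, hγ⟩ := IH (d - 1) b' Λ (W.erase u₀) (lnk k u₀ z)
        (by rw [Finset.card_erase_of_mem hu₀W]; omega) hΛdim hΛpure (by omega) hΛHb
        (by rw [Finset.card_erase_of_mem hu₀W]; omega) hysupp hycyc
      obtain ⟨z', hz'supp, hz'cyc, hzeq, hconesupp⟩ :=
        lift_vertex hu₀K hu₀W hsupp hz hγsupp hγ (by omega)
      obtain ⟨w', hw'supp, hw'⟩ := IH d (b' + 1) K (W.erase u₀) z'
        (by rw [Finset.card_erase_of_mem hu₀W]; omega) hdim hpure hb3 hHb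
        (by rw [Finset.card_erase_of_mem hu₀W]; omega) hz'supp hz'cyc
      refine ⟨w' - cone k u₀ γ, ?_, ?_⟩
      · intro F hF
        rcases Finset.mem_union.mp (Finsupp.support_sub hF) with h | h
        · exact ⟨(hw'supp F h).1, ((hw'supp F h).2.1).trans (Finset.erase_subset u₀ W),
            (hw'supp F h).2.2⟩
        · exact hconesupp F h
      · rw [map_sub, hw', hzeq]
    | zero =>
      have hbanner : K.IsBanner := banner_of_HbP0 hdim hpure hHb
      rcases Nat.lt_or_ge W.card (d + 1) with hsmall | hbig
      · by_cases hWd : W.card = d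
        · -- |W| = d : the simplex case
          have hNfu : Dop k (Nf k u₀ z) = - lnk k u₀ z := (split_cycle u₀ hz).2
          have hkey : Dop k (cone k u₀ (Nf k u₀ z)) = z := by
            calc Dop k (cone k u₀ (Nf k u₀ z))
                = Nf k u₀ z - cone k u₀ (Dop k (Nf k u₀ z)) :=
                  dop_cone (fun F hF => (supp_Nf hF).2)
              _ = Nf k u₀ z + cone k u₀ (lnk k u₀ z) := by rw [hNfu, map_neg, sub_neg_eq_add]
              _ = Nf k u₀ z + Pf k u₀ z := by rw [cone_lnk]
              _ = z := by rw [add_comm, Pf_add_Nf]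
          set ζ := cone k u₀ (Nf k u₀ z) with hζdef
          have hζsupp : ζ.support ⊆ {W} := by
            intro G hG
            obtain ⟨F, hF, huF, rfl⟩ := supp_cone hG
            obtain ⟨hFz, _⟩ := supp_Nf hF
            obtain ⟨hK', hW', hcard'⟩ := hsupp F hFz
            rw [Finset.mem_singleton]
            refine Finset.eq_of_subset_of_card_le (Finset.insert_subset hu₀W hW') ?_
            rw [Finset.card_insert_of_notMem huF, hcard']
            omega
          have hζ : ζ = Finsupp.single W (ζ W) := Finsupp.support_subset_singleton.mp hζsupp
          have hc : ζ W ≠ 0 := by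
            intro h
            apply hz0
            rw [← hkey, hζ, h, Finsupp.single_zero, map_zero]
          have hzc : z = (ζ W) • bnd k W := by
            calc z = Dop k ζ := hkey.symm
              _ = Dop k (Finsupp.single W (ζ W)) := by rw [← hζ]
              _ = (ζ W) • bnd k W := Dop_single _ _
          have hfacets : ∀ v ∈ W, W.erase v ∈ K.faces := by
            intro v hv
            have hmem : W.erase v ∈ z.support := by
              rw [Finsupp.mem_support_iff, hzc, Finsupp.smul_apply, bnd_apply_erase hv,
                smul_eq_mul]
              exact mul_ne_zero hc (pow_ne_zero _ (by norm_num))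
            exact (hsupp _ hmem).1
          have hcomp : K.IsComplete W := by
            intro p hp' q hq' hpq
            have hr : (W \ {p, q}).Nonempty := by
              rw [← Finset.card_pos]
              have h1 : ({p, q} : Finset V).card ≤ 2 := by
                refine (Finset.card_insert_le p {q}).trans ?_
                rw [Finset.card_singleton]
              have h2 := Finset.le_card_sdiff ({p, q} : Finset V) W
              omega
            obtain ⟨r, hrmem⟩ := hr
            obtain ⟨hrW, hrpq⟩ := Finset.mem_sdiff.mp hrmem
            refine K.down_closed (hfacets r hrW) ?_
            intro x hx
            refine Finset.mem_erase.mpr ⟨fun hc => hrpq (hc ▸ hx), ?_⟩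
            rcases Finset.mem_insert.mp hx with rfl | hx'
            · exact hp'
            · rw [Finset.mem_singleton] at hx'; exact hx' ▸ hq'
          have hWK : W ∈ K.faces := by
            refine hbanner W hcomp ⟨u₀, hu₀W, hfacets u₀ hu₀W⟩ ?_
            rw [hdim, hWd]
          refine ⟨Finsupp.single W (ζ W), ?_, ?_⟩
          · intro F hF
            have := Finsupp.support_single_subset hF
            rw [Finset.mem_singleton] at this
            rw [this]
            exact ⟨hWK, Finset.Subset.refl W, hWd⟩
          · rw [Dop_single, ← hzc]
        · -- |W| = d - 1 : contradiction, z must be 0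
          exfalso
          have hWd1 : W.card = d - 1 := by omega
          have hsuppW : z.support ⊆ {W} := by
            intro F hF
            obtain ⟨_, hFW, hFcard⟩ := hsupp F hF
            rw [Finset.mem_singleton]
            exact Finset.eq_of_subset_of_card_le hFW (by omega)
          have hzW : z = Finsupp.single W (z W) := Finsupp.support_subset_singleton.mp hsuppW
          have h0 : (Dop k (Finsupp.single W (z W))) (W.erase u₀) = 0 := by
            rw [← hzW, hz]; rfl
          rw [Dop_single, Finsupp.smul_apply, bnd_apply_erase hu₀W, smul_eq_mul] at h0
          have hzero : z W = 0 := by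
            rcases mul_eq_zero.mp h0 with h | h
            · exact h
            · exact absurd h (pow_ne_zero _ (by norm_num))
          exact hz0 (by rw [hzW, hzero, Finsupp.single_zero])
      · -- |W| ≥ d + 1
        have hd4 : 4 ≤ d := by omega
        by_cases hB2 : ∃ u ∈ W, ∃ v ∈ W, u ≠ v ∧ ∀ F ∈ z.support, ¬(u ∈ F ∧ v ∈ F)
        · -- B2 : uncovered pair, descend dropping two vertices
          obtain ⟨u, huW, v, hvW, huv, hcov⟩ := hB2
          obtain ⟨Fu, hFu, huFu⟩ := hA u huW
          obtain ⟨hFuK, hFuW, hFucard⟩ := hsupp Fu hFu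
          have huK : ({u} : Finset V) ∈ K.faces :=
            K.down_closed hFuK (Finset.singleton_subset_iff.mpr huFu)
          set Λ := K.link {u} huK with hΛdef
          have hΛdim : Λ.dimP1 = d - 1 := dimP1_link hdim hpure huK (by omega)
          have hΛpure : Λ.Pure (d - 1) := pure_link hpure huK
          have hΛbanner : Λ.IsBanner := banner_link hdim hpure (by omega) hbanner huK
          have hΛHb : HbP Λ 0 (d - 1) := HbP0_of_banner hΛbanner
          have hycyc : Dop k (lnk k u z) = 0 := (split_cycle u hz).1
          have hysupp : ∀ G ∈ (lnk k u z).support,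
              G ∈ Λ.faces ∧ G ⊆ (W.erase u).erase v ∧ G.card = (d - 1) - 1 := by
            intro G hG
            obtain ⟨F, hF, huF, rfl⟩ := supp_lnk hG
            obtain ⟨hFK, hFW, hFcard⟩ := hsupp F hF
            have hvF : v ∉ F := fun hvf => hcov F hF ⟨huF, hvf⟩
            refine ⟨?_, ?_, ?_⟩
            · rw [mem_link_iff]
              exact ⟨Finset.notMem_erase u F, by rwa [Finset.insert_erase huF]⟩
            · intro x hx
              have hx1 : x ∈ F := Finset.mem_of_mem_erase hx
              exact Finset.mem_erase.mpr ⟨fun hc => hvF (hc ▸ hx1),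
                Finset.mem_erase.mpr ⟨(Finset.mem_erase.mp hx).1, hFW hx1⟩⟩
            · rw [Finset.card_erase_of_mem huF, hFcard]
          have hvWe : v ∈ W.erase u := Finset.mem_erase.mpr ⟨fun hc => huv hc.symm, hvW⟩
          have hcards : ((W.erase u).erase v).card = W.card - 2 := by
            rw [Finset.card_erase_of_mem hvWe, Finset.card_erase_of_mem huW]
            omega
          obtain ⟨γ, hγsupp, hγ⟩ := IH (d - 1) 0 Λ ((W.erase u).erase v) (lnk k u z)
            (by omega) hΛdim hΛpure (by omega) hΛHb (by omega) hysupp hycyc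
          have hγsupp' : ∀ t ∈ γ.support, t ∈ Λ.faces ∧ t ⊆ W.erase u ∧ t.card = d - 1 := by
            intro t ht
            obtain ⟨h1, h2, h3⟩ := hγsupp t ht
            exact ⟨h1, h2.trans (Finset.erase_subset v (W.erase u)), by omega⟩
          obtain ⟨z', hz'supp, hz'cyc, hzeq, hconesupp⟩ :=
            lift_vertex huK huW hsupp hz hγsupp' hγ (by omega)
          obtain ⟨w', hw'supp, hw'⟩ := IH d 0 K (W.erase u) z'
            (by rw [Finset.card_erase_of_mem huW]; omega) hdim hpure hb3 hHb
            (by rw [Finset.card_erase_of_mem huW]; omega) hz'supp hz'cyc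
          refine ⟨w' - cone k u γ, ?_, ?_⟩
          · intro F hF
            rcases Finset.mem_union.mp (Finsupp.support_sub hF) with h | h
            · exact ⟨(hw'supp F h).1, ((hw'supp F h).2.1).trans (Finset.erase_subset u W),
                (hw'supp F h).2.2⟩
            · exact hconesupp F h
          · rw [map_sub, hw', hzeq]
        · -- B1 : all pairs covered, contradiction via bannerness
          exfalso
          push_neg at hB2
          have hWF₀ : 2 ≤ (W \ F₀).card := by
            have := Finset.card_sdiff_of_subset hF₀W
            omega
          obtain ⟨v, hv, v', hv', hvv'⟩ := Finset.one_lt_card.mp (by omega : 1 < (W \ F₀).card)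
          obtain ⟨hvW, hvF₀⟩ := Finset.mem_sdiff.mp hv
          obtain ⟨hv'W, hv'F₀⟩ := Finset.mem_sdiff.mp hv'
          have hsubW1 : insert v F₀ ⊆ W := Finset.insert_subset hvW hF₀W
          have hsubW2 : insert v' (insert v F₀) ⊆ W := Finset.insert_subset hv'W hsubW1
          have hcompl : ∀ (X : Finset V), X ⊆ W → K.IsComplete X := by
            intro X hXW p hp' q hq' hpq
            obtain ⟨F, hF, hpF, hqF⟩ := hB2 p (hXW hp') q (hXW hq') hpq
            exact K.down_closed (hsupp F hF).1
              (Finset.insert_subset hpF (Finset.singleton_subset_iff.mpr hqF))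
          have hvF₀' : v ∉ F₀ := hvF₀
          have hG1 : insert v F₀ ∈ K.faces := by
            refine hbanner _ (hcompl _ hsubW1) ⟨v, Finset.mem_insert_self v F₀, ?_⟩ ?_
            · rw [Finset.erase_insert hvF₀']
              exact hF₀K
            · rw [hdim, Finset.card_insert_of_notMem hvF₀', hF₀card]
              omega
          have hv'G1 : v' ∉ insert v F₀ := by
            intro hc
            rcases Finset.mem_insert.mp hc with h | h
            · exact hvv' h.symm
            · exact hv'F₀ h
          have hG2 : insert v' (insert v F₀) ∈ K.faces := by
            refine hbanner _ (hcompl _ hsubW2) ⟨v', Finset.mem_insert_self v' _, ?_⟩ ?_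
            · rw [Finset.erase_insert hv'G1]
              exact hG1
            · rw [hdim]
              have hcard1 : (insert v F₀).card = d := by
                rw [Finset.card_insert_of_notMem hvF₀', hF₀card]
                omega
              exact le_trans (le_of_eq hcard1.symm)
                (Finset.card_le_card (Finset.subset_insert v' _))
          have := card_le_dimP1 K hG2
          rw [hdim, Finset.card_insert_of_notMem hv'G1, Finset.card_insert_of_notMem hvF₀',
            hF₀card] at this
          omega

end StmtAux
namespace StmtAux

open SComplex

variable {V : Type} [Fintype V] [LinearOrder V] {k : Type} [Field k]

/-- Transfer from chains of a complex to ambient chains. -/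
noncomputable def toAmb (K : SComplex V) (j : ℕ) : K.chains k j →ₗ[k] Amb k V :=
  Finsupp.lsum k fun s => LinearMap.toSpanSingleton k _ (Finsupp.single s.1 (1 : k))

lemma toAmb_single (K : SComplex V) (j : ℕ) (s : K.simplex j) (a : k) :
    toAmb K j (Finsupp.single s a) = Finsupp.single s.1 a := by
  rw [toAmb, Finsupp.lsum_single, LinearMap.toSpanSingleton_apply, Finsupp.smul_single,
    smul_eq_mul, mul_one]

lemma toAmb_eq_mapDomain (K : SComplex V) (j : ℕ) (c : K.chains k j) :
    toAmb K j c = Finsupp.mapDomain Subtype.val c := by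
  have h : (toAmb K j : K.chains k j →ₗ[k] Amb k V)
      = Finsupp.lmapDomain k k Subtype.val := by
    apply Finsupp.lhom_ext
    intro s b
    rw [toAmb_single]
    exact (Finsupp.mapDomain_single).symm
  rw [h]
  rfl

lemma toAmb_injective (K : SComplex V) (j : ℕ) :
    Function.Injective (toAmb K j (k := k)) := by
  intro c₁ c₂ h
  rw [toAmb_eq_mapDomain, toAmb_eq_mapDomain] at h
  exact Finsupp.mapDomain_injective Subtype.val_injective h

lemma toAmb_supp {K : SComplex V} {j : ℕ} {c : K.chains k j} {F : Finset V}
    (hF : F ∈ (toAmb K j c).support) : F ∈ K.faces ∧ F.card = j := by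
  rw [toAmb_eq_mapDomain] at hF
  obtain ⟨s, _, rfl⟩ := Finset.mem_image.mp (Finsupp.mapDomain_support hF)
  exact s.2

lemma toAmb_bdry (K : SComplex V) (j : ℕ) (c : K.chains k (j + 1)) :
    toAmb K j (K.bdry k j c) = Dop k (toAmb K (j + 1) c) := by
  have h : (toAmb K j).comp (K.bdry k j)
      = (Dop k (V := V)).comp (toAmb K (j + 1)) := by
    apply Finsupp.lhom_ext
    intro s b
    rw [LinearMap.comp_apply, LinearMap.comp_apply, toAmb_single, Dop_single]
    rw [SComplex.bdry, Finsupp.lsum_single, LinearMap.toSpanSingleton_apply]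
    rw [map_smul]
    erw [map_sum]
    congr 1
    rw [bnd, ← Finset.sum_attach s.1 (fun v => ((-1 : k) ^ ((s.1.filter (· < v)).card)) •
      Finsupp.single (s.1.erase v) (1 : k))]
    refine Finset.sum_congr rfl fun v _ => ?_
    erw [map_smul, toAmb_single]
  exact LinearMap.congr_fun h c

lemma exists_preimage (K : SComplex V) (j : ℕ) (w : Amb k V)
    (hw : ∀ F ∈ w.support, F ∈ K.faces ∧ F.card = j) :
    ∃ c : K.chains k j, toAmb K j c = w := by
  classical
  refine ⟨Finsupp.subtypeDomain (fun F => F ∈ K.faces ∧ F.card = j) w, ?_⟩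
  refine (toAmb_eq_mapDomain K j _).trans ?_
  ext G
  by_cases hG : G ∈ K.faces ∧ G.card = j
  · have hGeq : G = Subtype.val (⟨G, hG⟩ : K.simplex j) := rfl
    rw [hGeq, Finsupp.mapDomain_apply Subtype.val_injective, Finsupp.subtypeDomain_apply]
  · rw [Finsupp.mapDomain_notin_range]
    · by_contra h
      exact hG (hw G (Finsupp.mem_support_iff.mpr fun hc => h hc.symm))
    · rintro ⟨s, rfl⟩
      exact hG s.2

end StmtAux
/-- Let `Δ` be a pure `(d-1)`-dimensional simplicial complex with nontrivial top
homology and `b(Δ) < d - 2`.  Then `b_{i,i+d-1}(k[Δ]) = 0` for all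
`i < d - b(Δ) - 1`; that is, `k[Δ]` satisfies property `𝔅_{d - b(Δ) - 1}`. -/
theorem stmt15 (k : Type) [Field k] {V : Type} [Fintype V] [LinearOrder V]
    (K : SComplex V) (d : ℕ) (hdim : K.dimP1 = d) (hpure : K.Pure d)
    (htop : Nontrivial (SComplex.Hred k K (d - 1)))
    (hb : K.bannerNumber < d - 2) :
    ∀ i < d - K.bannerNumber - 1, bettiH k K i (i + d - 1) = 0 := by
  classical
  intro i hi
  have hb3 : K.bannerNumber + 3 ≤ d := by omega
  have hne : {b | ∀ s : Finset V, ∀ hs : s ∈ K.faces, s.card = b →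
      K.degree s = K.dimP1 →
      (K.link s hs).IsBanner ∨ (K.link s hs).IsBdTwoSimplex}.Nonempty := by
    refine ⟨Fintype.card V + 1, ?_⟩
    intro s _ hcard _
    exfalso
    have h1 : s.card ≤ Fintype.card V :=
      le_trans (Finset.card_le_univ s) (le_of_eq Finset.card_univ)
    omega
  have hSmem : K.bannerNumber ∈ {b | ∀ s : Finset V, ∀ hs : s ∈ K.faces, s.card = b →
      K.degree s = K.dimP1 →
      (K.link s hs).IsBanner ∨ (K.link s hs).IsBdTwoSimplex} := Nat.sInf_mem hne
  have hHb : StmtAux.HbP K K.bannerNumber d := by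
    intro s hs hcard hdeg
    rcases hSmem s hs hcard (by rw [hdim]; exact hdeg) with h | h
    · exact h
    · exfalso
      obtain ⟨G, hG, hsub, hGcard⟩ := StmtAux.facet_of_degree hs hdeg
      obtain ⟨a, b', c, _, _, _, hfaces⟩ := h
      have ht : G \ s ∈ (K.link s hs).faces := by
        refine ⟨Finset.sdiff_inter_self s G, ?_⟩
        rw [Finset.sdiff_union_self_eq_union, Finset.union_eq_left.mpr hsub]
        exact hG
      have htcard : 3 ≤ (G \ s).card := by
        rw [Finset.card_sdiff_of_subset hsub, hGcard, hcard]
        omega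
      rw [hfaces] at ht
      obtain ⟨hsub3, hne3⟩ := ht
      have hcard3 : ({a, b', c} : Finset V).card ≤ 3 := by
        refine (Finset.card_insert_le _ _).trans (Nat.succ_le_succ ?_)
        refine (Finset.card_insert_le _ _).trans (Nat.succ_le_succ ?_)
        rw [Finset.card_singleton]
      exact hne3 (Finset.eq_of_subset_of_card_le hsub3 (by omega))
  rw [bettiH]
  apply Finset.sum_eq_zero
  intro W hWmem
  have hWcard : W.card = i + d - 1 := Finset.mem_powersetCard_univ.mp hWmem
  suffices h : ∀ n, n = d - 2 →
      Module.finrank k (SComplex.Hred k (K.induced W) n) = 0 by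
    exact h _ (by omega)
  intro n hn
  subst hn
  have hbot : Submodule.map (((K.induced W).bdries k (d-2)).mkQ)
      ((K.induced W).cycles k (d-2)) = ⊥ := by
    rw [eq_bot_iff]
    rintro x hx
    obtain ⟨ζ, hζ, rfl⟩ := hx
    rw [Submodule.mem_bot, Submodule.mkQ_apply, Submodule.Quotient.mk_eq_zero]
    have hζc : (K.induced W).bdry k (d-2) ζ = 0 := LinearMap.mem_ker.mp hζ
    have hzcyc : StmtAux.Dop k (StmtAux.toAmb (K.induced W) (d-2+1) ζ) = 0 := by
      rw [← StmtAux.toAmb_bdry, hζc, map_zero]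
    have hzsupp : ∀ F ∈ (StmtAux.toAmb (K.induced W) (d-2+1) ζ).support,
        F ∈ K.faces ∧ F ⊆ W ∧ F.card = d - 1 := by
      intro F hF
      obtain ⟨hfaces, hcard⟩ := StmtAux.toAmb_supp hF
      exact ⟨hfaces.1, hfaces.2, by omega⟩
    obtain ⟨w, hwsupp, hww⟩ := StmtAux.main_vanish (d + W.card) d K.bannerNumber K W
      (StmtAux.toAmb (K.induced W) (d-2+1) ζ)
      le_rfl hdim hpure hb3 hHb (by omega) hzsupp hzcyc
    obtain ⟨η, hη⟩ := StmtAux.exists_preimage (K.induced W) (d-2+1+1) w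
      (fun F hF => ⟨⟨(hwsupp F hF).1, (hwsupp F hF).2.1⟩, by
        have := (hwsupp F hF).2.2; omega⟩)
    refine ⟨η, ?_⟩
    apply StmtAux.toAmb_injective (K.induced W) (d-2+1)
    rw [StmtAux.toAmb_bdry, hη, hww]
  have hsub : Subsingleton ↥(Submodule.map (((K.induced W).bdries k (d-2)).mkQ)
      ((K.induced W).cycles k (d-2))) := by
    rw [hbot]
    infer_instance
  exact Module.finrank_zero_of_subsingleton
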